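/- Let R be a commutative Noetherian ring and M a finitely generated R-module with first syzygy Ω¹_R(M) (kernel of a surjection from a finitely generated free module F onto M). If a ∈ R annihilates Ext¹_R(M, Ω¹_R(M)), then there is a short exact sequence of R-modules 0 → (0 :_M a) → M ⊕ Ω¹_R(M) → Ω¹_R(M/aM) → 0, for a suitable choice of syzygy Ω¹_R(M/aM) of M/aM. -/

import Mathlib

universe u

open CategoryTheory

lemma exists_section (R : Type u) [CommRing R]
    (M : Type u) [AddCommGroup M] [Module R M]
    (k : ℕ) (f : (Fin k → R) →ₗ[R] M) (hf : Function.Surjective f) (a : R)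
    (ha : ∀ y : ((Ext R (ModuleCat.{u} R) 1).obj
        (Opposite.op (ModuleCat.of R M))).obj (ModuleCat.of R ↥(LinearMap.ker f)),
      a • y = 0) :
    ∃ s : M →ₗ[R] (Fin k → R), ∀ m : M, f (s m) = a • m := by
  classical
  set MC : ModuleCat.{u} R := ModuleCat.of R M
  set FC : ModuleCat.{u} R := ModuleCat.of R (Fin k → R)
  set KC : ModuleCat.{u} R := ModuleCat.of R ↥(LinearMap.ker f)
  let fC : FC ⟶ MC := ModuleCat.ofHom f
  have hepi : Epi fC := (ModuleCat.epi_iff_surjective fC).2 hf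
  let P : ProjectiveResolution MC := ProjectiveResolution.of MC
  let e0 := HomologicalComplex.singleObjXSelf (ComplexShape.down ℕ) 0 MC
  let π₀ : P.complex.X 0 ⟶ MC := P.π.f 0 ≫ e0.hom
  have hπ₀ : Epi π₀ := epi_comp _ _
  have hd0 : P.complex.d 1 0 ≫ π₀ = 0 := by
    rw [← Category.assoc, P.complex_d_comp_π_f_zero, Limits.zero_comp]
  -- exactness : ker π₀ = range d10
  have hexact : LinearMap.range (P.complex.d 1 0).hom
      = LinearMap.ker π₀.hom := by
    have h1 := P.exact₀.moduleCat_range_eq_ker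
    rw [h1]
    ext x
    simp only [LinearMap.mem_ker]
    constructor
    · intro hx
      show e0.hom.hom ((P.π.f 0).hom x) = 0
      rw [hx, map_zero]
    · intro hx
      have : e0.hom.hom ((P.π.f 0).hom x) = 0 := hx
      have h3 := congrArg e0.inv this
      rw [map_zero] at h3
      have h4 : e0.inv.hom (e0.hom.hom ((P.π.f 0).hom x)) = (P.π.f 0).hom x :=
        congrArg (fun g => g.hom ((P.π.f 0).hom x)) e0.hom_inv_id
      rwa [h4] at h3
  -- lift of π₀ through f
  let h₀ : P.complex.X 0 ⟶ FC := Projective.factorThru π₀ fC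
  have hh₀ : h₀ ≫ fC = π₀ := Projective.factorThru_comp _ _
  have hh₀' : ∀ x, f (h₀ x) = π₀ x := fun x => congrArg (fun g => g.hom x) hh₀
  -- the syzygy map h₁ : X 1 ⟶ KC
  let h₁ : P.complex.X 1 ⟶ KC := ModuleCat.ofHom (LinearMap.codRestrict (LinearMap.ker f)
    (h₀.hom ∘ₗ
      (P.complex.d 1 0).hom)
    (fun x => by
      rw [LinearMap.mem_ker]
      show f (h₀ ((P.complex.d 1 0) x)) = 0
      rw [hh₀']
      exact congrArg (fun g => g.hom x) hd0))
  let Q := P.complex.linearYonedaObj R KC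
  let S := Q.sc' 0 1 2
  have hprev : (ComplexShape.down ℕ).symm.prev 1 = 0 := by
    apply ComplexShape.prev_eq'
    simp
  have hnext : (ComplexShape.down ℕ).symm.next 1 = 2 := by
    apply ComplexShape.next_eq'
    simp
  have hS : ∀ x : S.moduleCatLeftHomologyData.H, a • x = 0 := by
    intro x
    let e : (((Ext R (ModuleCat.{u} R) 1).obj (Opposite.op MC)).obj KC) ≅
        S.moduleCatLeftHomologyData.H :=
      P.isoExt 1 KC ≪≫ Q.homologyIsoSc' 0 1 2 hprev hnext ≪≫ S.moduleCatHomologyIso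
    conv_lhs => rw [show x = e.hom (e.inv x) from (congrArg (fun g => g.hom x) e.inv_hom_id).symm]
    rw [← map_smul, ha, map_zero]
  -- h₁ is a cocycle
  have hz : S.g h₁ = 0 := by
    have hcomp : P.complex.d 2 1 ≫ h₁ = 0 := by
      refine ModuleCat.hom_ext (LinearMap.ext ?_)
      intro x
      apply Subtype.ext
      show h₀ ((P.complex.d 1 0) ((P.complex.d 2 1) x)) = 0
      have h9 : (P.complex.d 1 0) ((P.complex.d 2 1) x) = 0 :=
        congrArg (fun g => g.hom x) (P.complex.d_comp_d 2 1 0)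
      rw [h9, map_zero]
    show (Q.d 1 2) h₁ = 0
    rw [ChainComplex.linearYonedaObj_d]
    exact hcomp
  have hz' : h₁ ∈ LinearMap.ker S.g.hom := hz
  obtain ⟨w, hw⟩ : ∃ w : (P.complex.X 0 ⟶ KC), P.complex.d 1 0 ≫ w = a • h₁ := by
    have h5 := hS (S.moduleCatLeftHomologyData.π.hom ⟨h₁, hz'⟩)
    replace h5 := (map_smul S.moduleCatLeftHomologyData.π.hom a ⟨h₁, hz'⟩).trans h5
    have h6 : (a • (⟨h₁, hz'⟩ : LinearMap.ker S.g.hom)) ∈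
        LinearMap.range S.moduleCatToCycles :=
      (Submodule.Quotient.mk_eq_zero _).1 h5
    obtain ⟨w, hw⟩ := h6
    refine ⟨w, ?_⟩
    have h7 : S.f w = a • h₁ := congrArg Subtype.val hw
    have h8 : (Q.d 0 1) w = a • h₁ := h7
    rw [ChainComplex.linearYonedaObj_d] at h8
    exact h8
  -- the correcting map u
  let h₀' : P.complex.X 0 →ₗ[R] (Fin k → R) := h₀.hom
  let w' : P.complex.X 0 →ₗ[R] ↥(LinearMap.ker f) := w.hom
  let u : P.complex.X 0 →ₗ[R] (Fin k → R) :=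
    a • h₀' - (LinearMap.ker f).subtype ∘ₗ w'
  have hle : LinearMap.ker π₀.hom ≤ LinearMap.ker u := by
    rw [← hexact]
    rintro x ⟨y, rfl⟩
    rw [LinearMap.mem_ker]
    show a • h₀' ((P.complex.d 1 0) y) - ((w' ((P.complex.d 1 0) y)) : Fin k → R) = 0
    have h7 : w' ((P.complex.d 1 0) y) = a • h₁ y := congrArg (fun g => g.hom y) hw
    rw [h7]
    show a • h₀' ((P.complex.d 1 0) y) - a • h₀' ((P.complex.d 1 0) y) = 0
    rw [sub_self]
  have hsurj : Function.Surjective π₀.hom :=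
    (ModuleCat.epi_iff_surjective π₀).1 hπ₀
  let eq := LinearMap.quotKerEquivOfSurjective
    π₀.hom hsurj
  refine ⟨(LinearMap.ker π₀.hom).liftQ u hle ∘ₗ
    eq.symm.toLinearMap, ?_⟩
  intro m
  obtain ⟨x, hx⟩ := hsurj m
  have hmk : eq.symm m = Submodule.Quotient.mk x := by
    apply eq.injective
    rw [LinearEquiv.apply_symm_apply, ← hx]
    simp [eq, LinearMap.quotKerEquivOfSurjective, LinearEquiv.trans_apply,
      LinearMap.quotKerEquivRange_apply_mk, LinearEquiv.ofTop_apply]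
  show f (((LinearMap.ker π₀.hom).liftQ u hle) (eq.symm m)) = a • m
  rw [hmk, Submodule.liftQ_apply]
  show f (a • h₀' x - ((w' x) : Fin k → R)) = a • m
  have h10 : f ((w' x) : Fin k → R) = 0 := (w' x).2
  have h11 : f (h₀' x) = π₀ x := hh₀' x
  rw [map_sub, map_smul, h10, h11, hx, sub_zero]

/-- If `a ∈ R` annihilates `Ext¹_R(M, Ω¹M)`, where `Ω¹M = ker f` for a surjection
`f : Rᵏ → M`, then there are a first syzygy `Ω¹(M/aM) = ker g` of `M/aM` and a short exact
sequence `0 → (0 :_M a) → M ⊕ Ω¹M → Ω¹(M/aM) → 0`. -/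
theorem ses_from_ext_annihilator (R : Type u) [CommRing R] [IsNoetherianRing R]
    (M : Type u) [AddCommGroup M] [Module R M] [Module.Finite R M]
    (k : ℕ) (f : (Fin k → R) →ₗ[R] M) (hf : Function.Surjective f) (a : R)
    (ha : ∀ y : ((Ext R (ModuleCat.{u} R) 1).obj
        (Opposite.op (ModuleCat.of R M))).obj (ModuleCat.of R ↥(LinearMap.ker f)),
      a • y = 0) :
    ∃ (l : ℕ) (g : (Fin l → R) →ₗ[R] (M ⧸ (Ideal.span {a} • (⊤ : Submodule R M)))),
      Function.Surjective g ∧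
      ∃ (ι : ↥(Submodule.torsionBy R M a) →ₗ[R] M × ↥(LinearMap.ker f))
        (π : (M × ↥(LinearMap.ker f)) →ₗ[R] ↥(LinearMap.ker g)),
        Function.Injective ι ∧ Function.Surjective π ∧
          LinearMap.range ι = LinearMap.ker π := by
  obtain ⟨s, hs⟩ := exists_section R M k f hf a ha
  set N : Submodule R M := Ideal.span {a} • (⊤ : Submodule R M) with hN
  have memN : ∀ v : M, v ∈ N ↔ ∃ m : M, v = a • m := by
    intro v
    rw [hN, Submodule.ideal_span_singleton_smul]
    constructor
    · intro hv
      obtain ⟨m, -, hm⟩ := Set.mem_smul_set.1 hv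
      exact ⟨m, hm.symm⟩
    · rintro ⟨m, rfl⟩
      exact Submodule.smul_mem_pointwise_smul m a ⊤ trivial
  refine ⟨k, N.mkQ ∘ₗ f, (Submodule.mkQ_surjective N).comp hf, ?_⟩
  -- the inclusion ι
  have hι0 : ∀ m : ↥(Submodule.torsionBy R M a), f (-(s m.1)) = 0 := by
    intro m
    have := m.2
    rw [Submodule.mem_torsionBy_iff] at this
    rw [map_neg, hs, this, neg_zero]
  refine ⟨LinearMap.prod (Submodule.torsionBy R M a).subtype
      (LinearMap.codRestrict (LinearMap.ker f)
        (-(s ∘ₗ (Submodule.torsionBy R M a).subtype))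
        (fun m => by simpa using hι0 m)), ?_⟩
  -- the projection π
  have hπ0 : ∀ p : M × ↥(LinearMap.ker f),
      (s ∘ₗ LinearMap.fst R M ↥(LinearMap.ker f)
        + (LinearMap.ker f).subtype ∘ₗ LinearMap.snd R M ↥(LinearMap.ker f)) p
        ∈ LinearMap.ker (N.mkQ ∘ₗ f) := by
    intro p
    simp only [LinearMap.mem_ker, LinearMap.add_apply, LinearMap.comp_apply,
      LinearMap.fst_apply, LinearMap.snd_apply, Submodule.coe_subtype, map_add,
      Submodule.mkQ_apply]
    have h2 : f p.2.1 = 0 := p.2.2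
    have hmem : a • p.1 ∈ N := (memN _).2 ⟨p.1, rfl⟩
    rw [hs, h2, show Submodule.Quotient.mk (a • p.1) = (0 : M ⧸ N) from
      (Submodule.Quotient.mk_eq_zero N).2 hmem]
    simp
  refine ⟨LinearMap.codRestrict _ _ hπ0, ?_, ?_, ?_⟩
  · -- injectivity
    intro x y h
    exact Subtype.ext (congrArg Prod.fst h)
  · -- surjectivity
    rintro ⟨y, hy⟩
    rw [LinearMap.mem_ker, LinearMap.comp_apply, Submodule.mkQ_apply,
      Submodule.Quotient.mk_eq_zero] at hy
    obtain ⟨m, hm⟩ := (memN _).1 hy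
    have hx : y - s m ∈ LinearMap.ker f := by
      rw [LinearMap.mem_ker, map_sub, hs, hm, sub_self]
    refine ⟨(m, ⟨y - s m, hx⟩), ?_⟩
    apply Subtype.ext
    simp [LinearMap.codRestrict]
  · -- range ι = ker π
    ext p
    simp only [LinearMap.mem_range, LinearMap.mem_ker]
    constructor
    · rintro ⟨m, rfl⟩
      apply Subtype.ext
      simp [LinearMap.codRestrict]
    · intro hp
      have h1 : s p.1 + p.2.1 = 0 := congrArg Subtype.val hp
      have h2 : a • p.1 = 0 := by
        have := congrArg f h1
        rw [map_add, hs, (p.2.2 : f p.2.1 = 0), add_zero, map_zero] at this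
        exact this
      refine ⟨⟨p.1, by rw [Submodule.mem_torsionBy_iff]; exact h2⟩, ?_⟩
      apply Prod.ext
      · rfl
      · apply Subtype.ext
        simp only [LinearMap.prod_apply, Pi.prod, LinearMap.codRestrict_apply,
          LinearMap.neg_apply, LinearMap.comp_apply, Submodule.coe_subtype]
        exact neg_eq_of_add_eq_zero_right h1
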